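/- Let H ⊆ G be finite groups and S/R an H-Galois extension of commutative rings. Then the coinduced algebra Ind_H^G(S) = Hom_{ℤ[H]}(ℤ[G], S), with G acting by (g·t)(x) = t(xg) and pointwise multiplication, is a G-Galois extension of R. -/
import Mathlib

open scoped DirectSum


open scoped TensorProduct

/-- The canonical map `S ⊗[R] S → ∏_{g ∈ G} S`, `s ⊗ t ↦ (s · g(t))_g`, whose
bijectivity (together with finiteness and projectivity of `S` over `R`) defines a
`G`-Galois extension of commutative rings. -/
noncomputable def galMap (R S G : Type*) [CommRing R] [CommRing S] [Algebra R S]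
    [Group G] (act : G →* (S ≃ₐ[R] S)) : S ⊗[R] S →ₗ[R] (G → S) :=
  TensorProduct.lift
    (LinearMap.mk₂ R (fun s t g => s * act g t)
      (fun s s' t => by funext g; simp [add_mul])
      (fun c s t => by funext g; simp [smul_mul_assoc])
      (fun s t t' => by funext g; simp [mul_add])
      (fun c s t => by funext g; simp [mul_smul_comm]))

/-- `S/R` is a `G`-Galois extension of commutative rings. -/
def IsGaloisExt (R S G : Type*) [CommRing R] [CommRing S] [Algebra R S]
    [Group G] (act : G →* (S ≃ₐ[R] S)) : Prop :=
  Module.Finite R S ∧ Module.Projective R S ∧ Function.Bijective (galMap R S G act)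
/-- The coinduced algebra `Ind_H^G(S) = Hom_{ℤ[H]}(ℤ[G], S)`, realized as the
`R`-subalgebra of `∏_{g ∈ G} S` consisting of the `H`-equivariant functions
(a ℤ[H]-linear map out of ℤ[G] is determined by its values on the basis `G`). -/
def indAlg (R S : Type*) [CommRing R] [CommRing S] [Algebra R S]
    {G : Type*} [Group G] (H : Subgroup G) (act : H →* (S ≃ₐ[R] S)) :
    Subalgebra R (G → S) where
  carrier := {t | ∀ (h : H) (x : G), t ((h : G) * x) = act h (t x)}
  mul_mem' := fun {a b} ha hb h x => by simp [ha h x, hb h x]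
  one_mem' := fun h x => by simp
  add_mem' := fun {a b} ha hb h x => by simp [ha h x, hb h x]
  zero_mem' := fun h x => by simp
  algebraMap_mem' := fun r h x => by simp [Pi.algebraMap_apply]

/-- The coinduced `G`-action on `Ind_H^G(S)`: `(g • t)(x) = t(xg)`. -/
def indActEquiv (R S : Type*) [CommRing R] [CommRing S] [Algebra R S]
    {G : Type*} [Group G] (H : Subgroup G) (act : H →* (S ≃ₐ[R] S)) (g : G) :
    indAlg R S H act ≃ₐ[R] indAlg R S H act where
  toFun t := ⟨fun x => (t : G → S) (x * g), fun h x => by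
    simpa [mul_assoc] using t.2 h (x * g)⟩
  invFun t := ⟨fun x => (t : G → S) (x * g⁻¹), fun h x => by
    simpa [mul_assoc] using t.2 h (x * g⁻¹)⟩
  left_inv t := by ext x; simp [mul_assoc]
  right_inv t := by ext x; simp [mul_assoc]
  map_mul' a b := by ext x; rfl
  map_add' a b := by ext x; rfl
  commutes' r := by ext x; rfl

/-- The coinduced `G`-action on `Ind_H^G(S)` as a homomorphism into automorphisms. -/
def indActHom (R S : Type*) [CommRing R] [CommRing S] [Algebra R S]
    {G : Type*} [Group G] (H : Subgroup G) (act : H →* (S ≃ₐ[R] S)) :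
    G →* (indAlg R S H act ≃ₐ[R] indAlg R S H act) where
  toFun g := indActEquiv R S H act g
  map_one' := by
    apply AlgEquiv.ext; intro t; apply Subtype.ext; funext x
    simp [indActEquiv]
  map_mul' g g' := by
    apply AlgEquiv.ext; intro t; apply Subtype.ext; funext x
    simp [indActEquiv, mul_assoc]


section Stmt15Aux

set_option synthInstance.maxHeartbeats 1000000
set_option maxHeartbeats 2000000

open scoped DirectSum

variable (R S : Type*) [CommRing R] [CommRing S] [Algebra R S]
  {G : Type*} [Group G] (H : Subgroup G) (act : H →* (S ≃ₐ[R] S))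

local notation "CS" => Quotient (QuotientGroup.rightRel H)

variable {H}

theorem stmt15_sec_spec (x : G) :
    x * ((Quotient.mk (QuotientGroup.rightRel H) x).out)⁻¹ ∈ H :=
  (QuotientGroup.rightRel_apply).mp (Quotient.mk_out (s := QuotientGroup.rightRel H) x)

theorem stmt15_mem_of_mk_eq {x : G} {c : CS}
    (hc : Quotient.mk (QuotientGroup.rightRel H) x = c) : x * (c.out)⁻¹ ∈ H :=
  hc ▸ stmt15_sec_spec x

theorem stmt15_mk_of_mem_mul {k : G} (hk : k ∈ H) (x : G) :
    Quotient.mk (QuotientGroup.rightRel H) (k * x) = Quotient.mk _ x := by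
  apply Quotient.sound
  show (QuotientGroup.rightRel H) _ _
  rw [QuotientGroup.rightRel_apply]
  simpa using H.inv_mem hk

variable (H)

/-- Reconstruction: an element of `indAlg` is determined by its values on coset reps. -/
theorem stmt15_recon (t : indAlg R S H act) (x : G) :
    (t : G → S) x =
      act ⟨x * ((Quotient.mk (QuotientGroup.rightRel H) x).out)⁻¹, stmt15_sec_spec x⟩
        ((t : G → S) (Quotient.mk (QuotientGroup.rightRel H) x).out) := by
  have := t.2 ⟨x * ((Quotient.mk (QuotientGroup.rightRel H) x).out)⁻¹, stmt15_sec_spec x⟩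
      (Quotient.mk (QuotientGroup.rightRel H) x).out
  rw [show (x * ((Quotient.mk (QuotientGroup.rightRel H) x).out)⁻¹) *
      (Quotient.mk (QuotientGroup.rightRel H) x).out = x by group] at this
  exact this

/-- The evaluation equivalence `indAlg ≃ₗ[R] (H\G → S)`. -/
noncomputable def stmt15e : indAlg R S H act ≃ₗ[R] (CS → S) where
  toFun t c := (t : G → S) c.out
  map_add' _ _ := rfl
  map_smul' _ _ := rfl
  invFun f := ⟨fun x =>
      act ⟨x * ((Quotient.mk (QuotientGroup.rightRel H) x).out)⁻¹, stmt15_sec_spec x⟩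
        (f (Quotient.mk _ x)), by
    intro h x
    simp only [stmt15_mk_of_mem_mul h.2]
    have h2 : (⟨(h : G) * x * ((Quotient.mk (QuotientGroup.rightRel H) x).out)⁻¹,
        stmt15_mk_of_mem_mul h.2 x ▸ stmt15_sec_spec ((h : G) * x)⟩ : H)
        = h * ⟨x * ((Quotient.mk (QuotientGroup.rightRel H) x).out)⁻¹, stmt15_sec_spec x⟩ := by
      ext; simp [mul_assoc]
    rw [h2, map_mul]
    rfl⟩
  left_inv t := by
    apply Subtype.ext; funext x
    exact (stmt15_recon R S H act t x).symm
  right_inv f := by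
    funext c
    show act ⟨c.out * ((Quotient.mk (QuotientGroup.rightRel H) c.out).out)⁻¹, _⟩
        (f (Quotient.mk _ c.out)) = f c
    have hc : Quotient.mk (QuotientGroup.rightRel H) c.out = c := Quotient.out_eq c
    have h1 : (⟨c.out * ((Quotient.mk (QuotientGroup.rightRel H) c.out).out)⁻¹,
        stmt15_sec_spec c.out⟩ : H) = 1 := by
      ext; simp [hc]
    rw [h1, map_one]
    simp [hc]

/-- Evaluation of `galMap` of the induced algebra on a pure tensor. -/
theorem stmt15_galT_tmul (t t' : indAlg R S H act) (g x : G) :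
    ((galMap R (indAlg R S H act) G (indActHom R S H act) (t ⊗ₜ[R] t') g : indAlg R S H act)
      : G → S) x = (t : G → S) x * (t' : G → S) (x * g) := rfl

/-- Evaluation at a pair of group elements, as a linear map. -/
def stmt15EvT (g x : G) : (G → indAlg R S H act) →ₗ[R] S where
  toFun A := ((A g : indAlg R S H act) : G → S) x
  map_add' _ _ := rfl
  map_smul' _ _ := rfl

section WithFintype

variable [Fintype (Quotient (QuotientGroup.rightRel H))]
open scoped Classical

/-- Inclusion of the `c`-th component `S → indAlg`. -/
noncomputable def stmt15iota (c : CS) : S →ₗ[R] indAlg R S H act :=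
  (stmt15e R S H act).symm.toLinearMap ∘ₗ LinearMap.single R (fun _ : CS => S) c

theorem stmt15iota_apply (c : CS) (s : S) (x : G) :
    ((stmt15iota R S H act c s : indAlg R S H act) : G → S) x =
      if hx : Quotient.mk (QuotientGroup.rightRel H) x = c
      then act ⟨x * c.out⁻¹, stmt15_mem_of_mk_eq hx⟩ s else 0 := by
  have h1 : ((stmt15iota R S H act c s : indAlg R S H act) : G → S)
      (Quotient.mk (QuotientGroup.rightRel H) x).out
      = (Pi.single c s : CS → S) (Quotient.mk (QuotientGroup.rightRel H) x) := by
    have h2 : stmt15e R S H act (stmt15iota R S H act c s) = (Pi.single c s : CS → S) :=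
      (stmt15e R S H act).apply_symm_apply _
    exact congrFun h2 _
  rw [stmt15_recon R S H act (stmt15iota R S H act c s) x, h1]
  by_cases hx : Quotient.mk (QuotientGroup.rightRel H) x = c
  · subst hx; simp
  · simp [hx, Pi.single_eq_of_ne hx]

/-- The `S`-valued matrix coefficients of a function `G → indAlg`. -/
noncomputable def stmt15evMap (c d : CS) : (G → indAlg R S H act) →ₗ[R] (H → S) where
  toFun u h := (u (c.out⁻¹ * (h : G) * d.out) : G → S) c.out
  map_add' _ _ := rfl
  map_smul' _ _ := rfl

/-- Extension of `galMap` evaluation to all of `G` by zero. -/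
noncomputable def stmt15E (w : S ⊗[R] S) (g : G) : S :=
  if hg : g ∈ H then galMap R S H act w ⟨g, hg⟩ else 0

theorem stmt15E_zero (g : G) : stmt15E R S H act 0 g = 0 := by
  unfold stmt15E; split <;> simp

theorem stmt15E_add (w w' : S ⊗[R] S) (g : G) :
    stmt15E R S H act (w + w') g = stmt15E R S H act w g + stmt15E R S H act w' g := by
  unfold stmt15E; split <;> simp

/-- The candidate inverse of the Galois map of the induced algebra. -/
noncomputable def stmt15inv (ψ : (H → S) →ₗ[R] S ⊗[R] S) :
    (G → indAlg R S H act) →ₗ[R] (indAlg R S H act ⊗[R] indAlg R S H act) :=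
  ∑ c : CS, ∑ d : CS,
    (TensorProduct.map (stmt15iota R S H act c) (stmt15iota R S H act d)) ∘ₗ ψ ∘ₗ
      stmt15evMap R S H act c d


theorem stmt15keyL (c d : CS) (w : S ⊗[R] S) (g x : G) :
    stmt15EvT R S H act g x
      (galMap R (indAlg R S H act) G (indActHom R S H act)
        (TensorProduct.map (stmt15iota R S H act c) (stmt15iota R S H act d) w)) =
      if hx : Quotient.mk (QuotientGroup.rightRel H) x = c
      then act ⟨x * c.out⁻¹, stmt15_mem_of_mk_eq hx⟩
        (stmt15E R S H act w (c.out * g * d.out⁻¹))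
      else 0 := by
  induction w using TensorProduct.induction_on with
  | zero =>
      simp only [map_zero, stmt15E_zero]
      split <;> simp
  | add w₁ w₂ h₁ h₂ =>
      rw [map_add, map_add, map_add, h₁, h₂]
      by_cases hx : Quotient.mk (QuotientGroup.rightRel H) x = c
      · rw [dif_pos hx, dif_pos hx, dif_pos hx, stmt15E_add, map_add]
      · rw [dif_neg hx, dif_neg hx, dif_neg hx, add_zero]
  | tmul a b =>
      rw [TensorProduct.map_tmul]
      show ((galMap R (indAlg R S H act) G (indActHom R S H act)
          (stmt15iota R S H act c a ⊗ₜ[R] stmt15iota R S H act d b) g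
          : indAlg R S H act) : G → S) x = _
      rw [stmt15_galT_tmul, stmt15iota_apply, stmt15iota_apply]
      by_cases hx : Quotient.mk (QuotientGroup.rightRel H) x = c
      · by_cases hd : Quotient.mk (QuotientGroup.rightRel H) (x * g) = d
        · rw [dif_pos hx, dif_pos hd, dif_pos hx]
          have hH : c.out * g * d.out⁻¹ ∈ H := by
            have h1 : c.out * g * d.out⁻¹
                = (x * c.out⁻¹)⁻¹ * (x * g * d.out⁻¹) := by group
            rw [h1]
            exact H.mul_mem (H.inv_mem (stmt15_mem_of_mk_eq hx)) (stmt15_mem_of_mk_eq hd)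
          unfold stmt15E
          rw [dif_pos hH]
          show act ⟨x * c.out⁻¹, stmt15_mem_of_mk_eq hx⟩ a
              * act ⟨x * g * d.out⁻¹, stmt15_mem_of_mk_eq hd⟩ b
            = act ⟨x * c.out⁻¹, stmt15_mem_of_mk_eq hx⟩
                (a * act ⟨c.out * g * d.out⁻¹, hH⟩ b)
          rw [map_mul]
          congr 1
          have h2 : (⟨x * c.out⁻¹, stmt15_mem_of_mk_eq hx⟩ : H)
              * ⟨c.out * g * d.out⁻¹, hH⟩
              = ⟨x * g * d.out⁻¹, stmt15_mem_of_mk_eq hd⟩ := by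
            ext
            show (x * c.out⁻¹) * (c.out * g * d.out⁻¹) = x * g * d.out⁻¹
            group
          rw [← h2, map_mul]
          rfl
        · rw [dif_pos hx, dif_neg hd, dif_pos hx, mul_zero]
          have hH : c.out * g * d.out⁻¹ ∉ H := fun hH => hd (by
            have e1 : x * g = (x * c.out⁻¹) * ((c.out * g * d.out⁻¹) * d.out) := by group
            rw [e1, stmt15_mk_of_mem_mul (stmt15_mem_of_mk_eq hx),
                stmt15_mk_of_mem_mul hH, Quotient.out_eq])
          unfold stmt15E
          rw [dif_neg hH, map_zero]
      · rw [dif_neg hx, dif_neg hx, zero_mul]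

theorem stmt15_main (ψ : (H → S) →ₗ[R] S ⊗[R] S)
    (hψ : ∀ v, galMap R S H act (ψ v) = v) (u : G → indAlg R S H act) (g x : G) :
    ((galMap R (indAlg R S H act) G (indActHom R S H act)
        (stmt15inv R S H act ψ u) g : indAlg R S H act) : G → S) x
      = ((u g : indAlg R S H act) : G → S) x := by
  have hL : ((galMap R (indAlg R S H act) G (indActHom R S H act)
        (stmt15inv R S H act ψ u) g : indAlg R S H act) : G → S) x
      = stmt15EvT R S H act g x
          (galMap R (indAlg R S H act) G (indActHom R S H act)
            (stmt15inv R S H act ψ u)) := rfl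
  rw [hL]
  unfold stmt15inv
  simp only [LinearMap.sum_apply, LinearMap.coe_comp, Function.comp_apply, map_sum]
  simp only [stmt15keyL]
  rw [Finset.sum_comm]
  simp only [Finset.sum_dite_eq, Finset.mem_univ, if_true]
  have hE : ∀ d : CS, stmt15E R S H act
        (ψ (stmt15evMap R S H act (Quotient.mk (QuotientGroup.rightRel H) x) d u))
        ((Quotient.mk (QuotientGroup.rightRel H) x).out * g * d.out⁻¹)
      = if d = Quotient.mk (QuotientGroup.rightRel H)
            ((Quotient.mk (QuotientGroup.rightRel H) x).out * g)
        then ((u g : indAlg R S H act) : G → S)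
          (Quotient.mk (QuotientGroup.rightRel H) x).out
        else 0 := by
    intro d
    unfold stmt15E
    by_cases hH : (Quotient.mk (QuotientGroup.rightRel H) x).out * g * d.out⁻¹ ∈ H
    · rw [dif_pos hH, hψ]
      have hd : d = Quotient.mk (QuotientGroup.rightRel H)
          ((Quotient.mk (QuotientGroup.rightRel H) x).out * g) := by
        have h1 := stmt15_mk_of_mem_mul hH d.out
        rw [show ((Quotient.mk (QuotientGroup.rightRel H) x).out * g * d.out⁻¹) * d.out
            = (Quotient.mk (QuotientGroup.rightRel H) x).out * g by group,
          Quotient.out_eq] at h1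
        exact h1.symm
      rw [if_pos hd]
      show ((u ((Quotient.mk (QuotientGroup.rightRel H) x).out⁻¹
          * ((Quotient.mk (QuotientGroup.rightRel H) x).out * g * d.out⁻¹)
          * d.out) : indAlg R S H act) : G → S)
          (Quotient.mk (QuotientGroup.rightRel H) x).out = _
      rw [show (Quotient.mk (QuotientGroup.rightRel H) x).out⁻¹
          * ((Quotient.mk (QuotientGroup.rightRel H) x).out * g * d.out⁻¹)
          * d.out = g by group]
    · rw [dif_neg hH]
      have hd : ¬ d = Quotient.mk (QuotientGroup.rightRel H)
          ((Quotient.mk (QuotientGroup.rightRel H) x).out * g) := by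
        intro h
        subst h
        exact hH (stmt15_sec_spec _)
      rw [if_neg hd]
  rw [Finset.sum_congr rfl (fun d _ => by rw [hE d])]
  simp only [apply_ite (act ⟨x * (Quotient.mk (QuotientGroup.rightRel H) x).out⁻¹,
      stmt15_sec_spec x⟩), map_zero]
  rw [Finset.sum_ite_eq' Finset.univ, if_pos (Finset.mem_univ _)]
  exact (stmt15_recon R S H act (u g) x).symm

theorem stmt15_sum_iota (a : indAlg R S H act) :
    ∑ c : CS, stmt15iota R S H act c ((a : G → S) c.out) = a := by
  apply (stmt15e R S H act).injective
  rw [map_sum]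
  have h1 : ∀ c : CS, stmt15e R S H act (stmt15iota R S H act c ((a : G → S) c.out))
      = (Pi.single c ((a : G → S) c.out) : CS → S) :=
    fun c => (stmt15e R S H act).apply_symm_apply _
  rw [Finset.sum_congr rfl (fun c _ => h1 c)]
  exact Finset.univ_sum_single (stmt15e R S H act a)

theorem stmt15_invgal (ψ : (H → S) →ₗ[R] S ⊗[R] S)
    (hψ' : ∀ v, ψ (galMap R S H act v) = v) (z : indAlg R S H act ⊗[R] indAlg R S H act) :
    stmt15inv R S H act ψ
      (galMap R (indAlg R S H act) G (indActHom R S H act) z) = z := by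
  have h : (stmt15inv R S H act ψ) ∘ₗ galMap R (indAlg R S H act) G (indActHom R S H act)
      = LinearMap.id := by
    apply TensorProduct.ext'
    intro t t'
    show stmt15inv R S H act ψ
        (galMap R (indAlg R S H act) G (indActHom R S H act) (t ⊗ₜ[R] t')) = t ⊗ₜ[R] t'
    unfold stmt15inv
    simp only [LinearMap.sum_apply, LinearMap.coe_comp, Function.comp_apply]
    have hev : ∀ c d : CS, stmt15evMap R S H act c d
          (galMap R (indAlg R S H act) G (indActHom R S H act) (t ⊗ₜ[R] t'))
        = galMap R S H act ((t : G → S) c.out ⊗ₜ[R] (t' : G → S) d.out) := by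
      intro c d
      funext h
      show ((galMap R (indAlg R S H act) G (indActHom R S H act) (t ⊗ₜ[R] t')
          (c.out⁻¹ * (h : G) * d.out) : indAlg R S H act) : G → S) c.out = _
      rw [stmt15_galT_tmul]
      rw [show c.out * (c.out⁻¹ * (h : G) * d.out) = (h : G) * d.out by group]
      rw [t'.2 h d.out]
      rfl
    simp only [hev, hψ', TensorProduct.map_tmul]
    simp only [← TensorProduct.tmul_sum, ← TensorProduct.sum_tmul]
    rw [stmt15_sum_iota, stmt15_sum_iota]
  exact DFunLike.congr_fun h z

end WithFintype

end Stmt15Aux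

set_option synthInstance.maxHeartbeats 1000000
set_option maxHeartbeats 2000000

theorem stmt15 (R S : Type*) [CommRing R] [CommRing S] [Algebra R S]
    (G : Type*) [Group G] [Finite G] (H : Subgroup G)
    (act : H →* (S ≃ₐ[R] S)) (hgal : IsGaloisExt R S H act) :
    IsGaloisExt R (indAlg R S H act) G (indActHom R S H act) := by
  classical
  obtain ⟨hfin, hproj, hbij⟩ := hgal
  haveI : Module.Finite R S := hfin
  haveI : Module.Projective R S := hproj
  haveI : Fintype (Quotient (QuotientGroup.rightRel H)) := Fintype.ofFinite _
  refine ⟨Module.Finite.equiv (stmt15e R S H act).symm, ?_, ?_⟩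
  · haveI : Module.Projective R (⨁ _ : Quotient (QuotientGroup.rightRel H), S) :=
      inferInstanceAs (Module.Projective R (Π₀ _ : Quotient (QuotientGroup.rightRel H), S))
    exact Module.Projective.of_equiv
      ((DirectSum.linearEquivFunOnFintype R _ (fun _ => S)).trans (stmt15e R S H act).symm)
  · set ψe := LinearEquiv.ofBijective (galMap R S H act) hbij with hψe
    let ψ : (H → S) →ₗ[R] S ⊗[R] S := ψe.symm.toLinearMap
    have hψ : ∀ v, galMap R S H act (ψ v) = v := fun v => ψe.apply_symm_apply v
    have hψ' : ∀ v, ψ (galMap R S H act v) = v := fun v => ψe.symm_apply_apply v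
    constructor
    · intro a b hab
      rw [← stmt15_invgal R S H act ψ hψ' a, hab, stmt15_invgal R S H act ψ hψ' b]
    · intro u
      refine ⟨stmt15inv R S H act ψ u, ?_⟩
      funext g
      apply Subtype.ext
      funext x
      exact stmt15_main R S H act ψ hψ u g x
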